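/- Fix an integer n ≥ 1 and define C_{α,θ,n} = Γ(θ+1)Γ(θ/α+n)α^{n−1} / (Γ(θ+nα)Γ(θ/α+1)Γ(1−α)^n). Then b(α,θ) · log C_{α,θ,n} converges to −n as a(α,θ) → 0 over pairs (α,θ) with α ∈ (0,1) and θ > 0. -/

import Mathlib

open MeasureTheory Filter Set

/-- `a(α,θ) = max(α, |θ|)`. -/
noncomputable def aParam (α θ : ℝ) : ℝ := max α |θ|

/-- `b(α,θ) = (-log a(α,θ))⁻¹`. -/
noncomputable def bParam (α θ : ℝ) : ℝ := (-Real.log (aParam α θ))⁻¹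

/-- The normalizing constant
`C_{α,θ,n} = Γ(θ+1)Γ(θ/α+n)α^{n-1} / (Γ(θ+nα)Γ(θ/α+1)Γ(1-α)^n)` in the joint density of the
first `n` coordinates of the two-parameter Poisson–Dirichlet distribution. -/
noncomputable def Cconst (α θ : ℝ) (n : ℕ) : ℝ :=
  Real.Gamma (θ + 1) * Real.Gamma (θ / α + n) * α ^ (n - 1) /
    (Real.Gamma (θ + n * α) * Real.Gamma (θ / α + 1) * Real.Gamma (1 - α) ^ n)

/-- The filter describing `a(α,θ) → 0` over pairs `(α,θ)` with `α ∈ (0,1)` and `θ > 0`. -/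
noncomputable def smallParamFilter' : Filter (ℝ × ℝ) :=
  (Filter.comap (fun p : ℝ × ℝ => aParam p.1 p.2) (nhdsWithin 0 (Set.Ioi 0))) ⊓
    Filter.principal {p : ℝ × ℝ | p.1 ∈ Set.Ioo (0:ℝ) 1 ∧ 0 < p.2}

lemma gamma_prod (x : ℝ) (hx : 0 < x) (n : ℕ) :
    Real.Gamma (x + n) = Real.Gamma x * ∏ k ∈ Finset.range n, (x + k) := by
  induction n with
  | zero => simp
  | succ m ih =>
      have hxm : x + (m : ℝ) ≠ 0 := by positivity
      have : x + ((m + 1 : ℕ) : ℝ) = (x + m) + 1 := by push_cast; ring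
      rw [this, Real.Gamma_add_one hxm, ih, Finset.prod_range_succ]
      ring


lemma Cconst_eq (α θ : ℝ) (hα : α ∈ Set.Ioo (0:ℝ) 1) (hθ : 0 < θ) (m : ℕ) :
    Cconst α θ (m + 1) =
      Real.Gamma (θ + 1) * (∏ k ∈ Finset.range (m + 1), (θ + (k + 1) * α)) /
        (Real.Gamma (θ + (m + 1) * α + 1) * Real.Gamma (1 - α) ^ (m + 1)) := by
  obtain ⟨hα0, hα1⟩ := hα
  have hαne : α ≠ 0 := ne_of_gt hα0
  have hx : (0:ℝ) < θ / α + 1 := by positivity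
  have h1 : Real.Gamma (θ / α + ((m + 1 : ℕ) : ℝ)) =
      Real.Gamma (θ / α + 1) * ∏ k ∈ Finset.range m, (θ / α + 1 + k) := by
    have := gamma_prod (θ / α + 1) hx m
    have he : θ / α + ((m + 1 : ℕ) : ℝ) = θ / α + 1 + (m : ℝ) := by push_cast; ring
    rw [he, this]
  have h2 : α ^ m * ∏ k ∈ Finset.range m, (θ / α + 1 + k) =
      ∏ k ∈ Finset.range m, (θ + (k + 1) * α) := by
    have hh : ∏ k ∈ Finset.range m, (α * (θ / α + 1 + k)) =
        α ^ m * ∏ k ∈ Finset.range m, (θ / α + 1 + k) := by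
      rw [Finset.prod_mul_distrib, Finset.prod_const, Finset.card_range]
    rw [← hh]
    refine Finset.prod_congr rfl fun k _ => ?_
    field_simp
    ring
  have hsum : (0:ℝ) < θ + (m + 1) * α := by positivity
  have hGrec : Real.Gamma (θ + (m + 1) * α + 1) =
      (θ + (m + 1) * α) * Real.Gamma (θ + (m + 1) * α) := Real.Gamma_add_one (ne_of_gt hsum)
  have hsplit : ∏ k ∈ Finset.range (m + 1), (θ + (k + 1) * α) =
      (∏ k ∈ Finset.range m, (θ + (k + 1) * α)) * (θ + (m + 1) * α) := by
    rw [Finset.prod_range_succ]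
  have hG1 : Real.Gamma (θ / α + 1) ≠ 0 := ne_of_gt (Real.Gamma_pos_of_pos hx)
  have hG2 : Real.Gamma (θ + (m + 1) * α) ≠ 0 := ne_of_gt (Real.Gamma_pos_of_pos (by positivity))
  have hG3 : Real.Gamma (1 - α) ≠ 0 := ne_of_gt (Real.Gamma_pos_of_pos (by linarith))
  have hG1p : (0:ℝ) < Real.Gamma (θ / α + 1) := Real.Gamma_pos_of_pos hx
  have hG2p : (0:ℝ) < Real.Gamma (θ + (m + 1) * α) := Real.Gamma_pos_of_pos (by positivity)
  have hBp : (0:ℝ) < Real.Gamma (1 - α) := Real.Gamma_pos_of_pos (by linarith)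
  rw [Cconst, show (m + 1) - 1 = m from rfl]
  push_cast at h1 hG2p hGrec hsplit hsum ⊢
  rw [h1, hGrec, hsplit]
  rw [div_eq_div_iff (by positivity) (by positivity)]
  linear_combination (Real.Gamma (θ + 1) * Real.Gamma (θ / α + 1) * ((θ + ((m:ℝ) + 1) * α) *
    Real.Gamma (θ + ((m:ℝ) + 1) * α) * Real.Gamma (1 - α) ^ (m + 1))) * h2


lemma log_Cconst (α θ : ℝ) (hα : α ∈ Set.Ioo (0:ℝ) 1) (hθ : 0 < θ) (m : ℕ) :
    Real.log (Cconst α θ (m + 1)) =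
      (∑ k ∈ Finset.range (m + 1), Real.log (θ + (k + 1) * α)) +
        (Real.log (Real.Gamma (θ + 1)) - Real.log (Real.Gamma (θ + (m + 1) * α + 1)) -
          (m + 1) * Real.log (Real.Gamma (1 - α))) := by
  obtain ⟨hα0, hα1⟩ := hα
  have hΓ1 : (0:ℝ) < Real.Gamma (θ + 1) := Real.Gamma_pos_of_pos (by linarith)
  have hΓ2 : (0:ℝ) < Real.Gamma (θ + (m + 1) * α + 1) := Real.Gamma_pos_of_pos (by positivity)
  have hΓ3 : (0:ℝ) < Real.Gamma (1 - α) := Real.Gamma_pos_of_pos (by linarith)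
  have hP : ∀ k ∈ Finset.range (m + 1), (θ + ((k:ℝ) + 1) * α) ≠ 0 := fun k _ => by positivity
  have hPpos : (0:ℝ) < ∏ k ∈ Finset.range (m + 1), (θ + (k + 1) * α) :=
    Finset.prod_pos fun k _ => by positivity
  rw [Cconst_eq α θ ⟨hα0, hα1⟩ hθ m]
  rw [Real.log_div (by positivity) (by positivity), Real.log_mul (ne_of_gt hΓ1) (ne_of_gt hPpos),
    Real.log_mul (ne_of_gt hΓ2) (by positivity), Real.log_pow, Real.log_prod hP]
  push_cast
  ring


/-- For fixed `n ≥ 1`, `b(α,θ) log C_{α,θ,n} → -n` as `a(α,θ) → 0` over pairs `(α,θ)` with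
`α ∈ (0,1)` and `θ > 0`. -/
theorem tendsto_bParam_log_Cconst (n : ℕ) (hn : 1 ≤ n) :
    Filter.Tendsto (fun p : ℝ × ℝ => bParam p.1 p.2 * Real.log (Cconst p.1 p.2 n))
      smallParamFilter' (nhds (-(n : ℝ))) := by
  obtain ⟨m, rfl⟩ : ∃ m, n = m + 1 := ⟨n - 1, (Nat.succ_pred_eq_of_pos hn).symm⟩
  set F := smallParamFilter' with hF
  have hmem : ∀ᶠ p : ℝ × ℝ in F, p.1 ∈ Set.Ioo (0:ℝ) 1 ∧ 0 < p.2 :=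
    le_principal_iff.mp inf_le_right
  have haT : Tendsto (fun p : ℝ × ℝ => aParam p.1 p.2) F (nhdsWithin 0 (Set.Ioi 0)) :=
    tendsto_comap.mono_left inf_le_left
  have haT0 : Tendsto (fun p : ℝ × ℝ => aParam p.1 p.2) F (nhds 0) :=
    haT.mono_right nhdsWithin_le_nhds
  have haPos : ∀ᶠ p : ℝ × ℝ in F, 0 < aParam p.1 p.2 :=
    haT.eventually eventually_mem_nhdsWithin
  have haLt1 : ∀ᶠ p : ℝ × ℝ in F, aParam p.1 p.2 < 1 :=
    haT0.eventually_lt_const one_pos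
  have hb0 : Tendsto (fun p : ℝ × ℝ => bParam p.1 p.2) F (nhds 0) := by
    have h1 : Tendsto (fun p : ℝ × ℝ => -Real.log (aParam p.1 p.2)) F atTop :=
      tendsto_neg_atBot_atTop.comp (Real.tendsto_log_nhdsGT_zero.comp haT)
    exact tendsto_inv_atTop_zero.comp h1
  have hbnn : ∀ᶠ p : ℝ × ℝ in F, 0 ≤ bParam p.1 p.2 := by
    filter_upwards [haPos, haLt1] with p h1 h2
    have : Real.log (aParam p.1 p.2) < 0 := Real.log_neg h1 h2
    rw [bParam]
    exact le_of_lt (inv_pos.mpr (by linarith))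
  have hbla : ∀ᶠ p : ℝ × ℝ in F, bParam p.1 p.2 * Real.log (aParam p.1 p.2) = -1 := by
    filter_upwards [haPos, haLt1] with p h1 h2
    have hne : Real.log (aParam p.1 p.2) ≠ 0 := ne_of_lt (Real.log_neg h1 h2)
    rw [bParam, inv_neg, neg_mul, inv_mul_cancel₀ hne]
  -- each summand tends to -1
  have hterm : ∀ k : ℕ, Tendsto (fun p : ℝ × ℝ =>
      bParam p.1 p.2 * Real.log (p.2 + ((k : ℝ) + 1) * p.1)) F (nhds (-1)) := by
    intro k
    have hsplit : ∀ᶠ p : ℝ × ℝ in F,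
        bParam p.1 p.2 * Real.log (aParam p.1 p.2) +
          bParam p.1 p.2 * Real.log ((p.2 + ((k:ℝ) + 1) * p.1) / aParam p.1 p.2) =
        bParam p.1 p.2 * Real.log (p.2 + ((k:ℝ) + 1) * p.1) := by
      filter_upwards [hmem, haPos] with p hp ha
      obtain ⟨⟨h1, _⟩, h3⟩ := hp
      have hx : 0 < p.2 + ((k:ℝ) + 1) * p.1 := by positivity
      rw [Real.log_div (ne_of_gt hx) (ne_of_gt ha)]
      ring
    have hzero : Tendsto (fun p : ℝ × ℝ =>
        bParam p.1 p.2 * Real.log ((p.2 + ((k:ℝ) + 1) * p.1) / aParam p.1 p.2)) F (nhds 0) := by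
      apply squeeze_zero' ?_ ?_ (by simpa using hb0.mul_const (Real.log ((k:ℝ) + 2)))
      · filter_upwards [hmem, haPos, hbnn] with p hp ha hb
        obtain ⟨⟨h1, _⟩, h3⟩ := hp
        have hxa : aParam p.1 p.2 ≤ p.2 + ((k:ℝ) + 1) * p.1 := by
          rw [aParam, abs_of_pos h3]
          have hk : (0:ℝ) ≤ (k:ℝ) := Nat.cast_nonneg k
          apply max_le <;> nlinarith
        have hlog : 0 ≤ Real.log ((p.2 + ((k:ℝ) + 1) * p.1) / aParam p.1 p.2) :=
          Real.log_nonneg ((le_div_iff₀ ha).mpr (by linarith))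
        positivity
      · filter_upwards [hmem, haPos, hbnn] with p hp ha hb
        obtain ⟨⟨h1, _⟩, h3⟩ := hp
        have ht : p.2 ≤ aParam p.1 p.2 := le_trans (le_abs_self _) (le_max_right _ _)
        have hA : p.1 ≤ aParam p.1 p.2 := le_max_left _ _
        have hub : (p.2 + ((k:ℝ) + 1) * p.1) / aParam p.1 p.2 ≤ (k:ℝ) + 2 := by
          rw [div_le_iff₀ ha]
          have hk : (0:ℝ) ≤ (k:ℝ) := Nat.cast_nonneg k
          nlinarith
        have hxpos : 0 < (p.2 + ((k:ℝ) + 1) * p.1) / aParam p.1 p.2 := by positivity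
        exact mul_le_mul_of_nonneg_left (Real.log_le_log hxpos hub) hb
    have hmain : Tendsto (fun p : ℝ × ℝ =>
        bParam p.1 p.2 * Real.log (aParam p.1 p.2) +
          bParam p.1 p.2 * Real.log ((p.2 + ((k:ℝ) + 1) * p.1) / aParam p.1 p.2)) F
        (nhds (-1 + 0)) :=
      Tendsto.add (tendsto_const_nhds.congr' (hbla.mono fun _ h => h.symm)) hzero
    rw [add_zero] at hmain
    exact hmain.congr' hsplit
  -- θ and α tend to 0
  have hθto : Tendsto (fun p : ℝ × ℝ => p.2) F (nhds 0) := by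
    apply squeeze_zero' (hmem.mono fun p hp => le_of_lt hp.2)
      (Eventually.of_forall fun p => le_trans (le_abs_self _) (le_max_right _ _)) haT0
  have hαto : Tendsto (fun p : ℝ × ℝ => p.1) F (nhds 0) := by
    apply squeeze_zero' (hmem.mono fun p hp => le_of_lt hp.1.1)
      (Eventually.of_forall fun p => le_max_left _ _) haT0
  have hΓcont : ContinuousAt Real.Gamma 1 := by
    refine (Real.differentiableAt_Gamma fun j => ?_).continuousAt
    have : (0:ℝ) ≤ (j:ℝ) := Nat.cast_nonneg j
    intro h
    linarith [h]
  have hΓlog : ∀ {f : ℝ × ℝ → ℝ}, Tendsto f F (nhds 1) →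
      Tendsto (fun p => Real.log (Real.Gamma (f p))) F (nhds 0) := by
    intro f hf
    have hg : Tendsto (fun p => Real.Gamma (f p)) F (nhds 1) := by
      have := hΓcont.tendsto.comp hf
      simpa [Function.comp_def, Real.Gamma_one] using this
    have := (Real.continuousAt_log one_ne_zero).tendsto.comp hg
    simpa [Function.comp_def] using this
  have h1t : Tendsto (fun p : ℝ × ℝ => Real.log (Real.Gamma (p.2 + 1))) F (nhds 0) :=
    hΓlog (by simpa using hθto.add (tendsto_const_nhds (x := (1:ℝ))))
  have h2t : Tendsto (fun p : ℝ × ℝ =>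
      Real.log (Real.Gamma (p.2 + ((m:ℝ) + 1) * p.1 + 1))) F (nhds 0) := by
    apply hΓlog
    have : Tendsto (fun p : ℝ × ℝ => p.2 + ((m:ℝ) + 1) * p.1 + 1) F (nhds (0 + ((m:ℝ)+1) * 0 + 1)) :=
      (hθto.add ((hαto.const_mul _))).add tendsto_const_nhds
    simpa using this
  have h3t : Tendsto (fun p : ℝ × ℝ => Real.log (Real.Gamma (1 - p.1))) F (nhds 0) := by
    apply hΓlog
    have : Tendsto (fun p : ℝ × ℝ => 1 - p.1) F (nhds (1 - 0)) := tendsto_const_nhds.sub hαto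
    simpa using this
  have hR : Tendsto (fun p : ℝ × ℝ => bParam p.1 p.2 *
      (Real.log (Real.Gamma (p.2 + 1)) - Real.log (Real.Gamma (p.2 + ((m:ℝ) + 1) * p.1 + 1)) -
        ((m:ℝ) + 1) * Real.log (Real.Gamma (1 - p.1)))) F (nhds 0) := by
    have := hb0.mul ((h1t.sub h2t).sub (h3t.const_mul ((m:ℝ)+1)))
    simpa using this
  have hsum : Tendsto (fun p : ℝ × ℝ =>
      ∑ k ∈ Finset.range (m+1), bParam p.1 p.2 * Real.log (p.2 + ((k:ℝ) + 1) * p.1)) F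
      (nhds (∑ _k ∈ Finset.range (m+1), (-1 : ℝ))) :=
    tendsto_finset_sum _ fun k _ => hterm k
  have htotal := hsum.add hR
  have heq : ∀ᶠ p : ℝ × ℝ in F,
      (∑ k ∈ Finset.range (m+1), bParam p.1 p.2 * Real.log (p.2 + ((k:ℝ) + 1) * p.1)) +
        bParam p.1 p.2 *
          (Real.log (Real.Gamma (p.2 + 1)) - Real.log (Real.Gamma (p.2 + ((m:ℝ) + 1) * p.1 + 1)) -
            ((m:ℝ) + 1) * Real.log (Real.Gamma (1 - p.1))) =
      bParam p.1 p.2 * Real.log (Cconst p.1 p.2 (m + 1)) := by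
    filter_upwards [hmem] with p hp
    rw [log_Cconst p.1 p.2 hp.1 hp.2 m, mul_add, Finset.mul_sum]
  have hval : (∑ _k ∈ Finset.range (m+1), (-1 : ℝ)) + 0 = -((m+1 : ℕ) : ℝ) := by
    simp
  rw [← hval]
  exact htotal.congr' heq
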